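/- Proposition 2, case 2, for the reduced formulation: if the covariates are nested, then every extreme point (z, v) of the polyhedron Q is integral, i.e., z_ℓ ∈ {0, 1} for every ℓ ∈ Fin L and v_{p,k} is an integer for every p ∈ Fin P and k ∈ Fin K_p. -/

import Mathlib

/-- auxiliary inequality used to keep the perturbed point inside `Q`. -/
theorem aux_abs_ineq (s v δ : ℝ) (h1 : |s| ≤ v) (h2 : |δ| ≤ |s|) :
    |s + δ| ≤ v + (if s < 0 then -1 else 1) * δ := by
  rcases lt_or_ge s 0 with hs | hs
  · rw [if_pos hs]
    rw [abs_of_neg hs] at h1 h2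
    have hδ : δ ≤ -s := le_trans (le_abs_self δ) h2
    rw [abs_of_nonpos (by linarith)]
    linarith
  · rw [if_neg (not_lt.mpr hs)]
    rw [abs_of_nonneg hs] at h1 h2
    have hδ : -s ≤ δ := by have := neg_abs_le δ; linarith
    rw [abs_of_nonneg (by linarith)]
    linarith

set_option maxHeartbeats 1000000 in
/-- Proposition 2, case 2, reduced formulation: with nested covariates, every
extreme point of the polyhedron `Q` is integral. -/
theorem prop2_case2_reduced_integral
    (T L P : ℕ) (hT : 0 < T) (hL : 0 < L)
    (K : Fin P → ℕ) (hK : ∀ p, 0 < K p)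
    (c : ∀ p : Fin P, Fin L → Fin (K p))
    (hnested : ∀ i j : Fin P, i < j → ∀ k : Fin (K j),
      ∃ k' : Fin (K i), ∀ ℓ, c j ℓ = k → c i ℓ = k')
    (N : ∀ p : Fin P, Fin (K p) → ℕ)
    (hN : ∀ p, ∑ k, N p k = T)
    (Q : Set ((Fin L → ℝ) × (∀ p : Fin P, Fin (K p) → ℝ)))
    (hQ : Q = {zv | (∀ ℓ, 0 ≤ zv.1 ℓ ∧ zv.1 ℓ ≤ 1) ∧
      (∑ ℓ, zv.1 ℓ) = (T : ℝ) ∧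
      ∀ p k, |(∑ ℓ ∈ Finset.univ.filter (fun ℓ => c p ℓ = k), zv.1 ℓ) - (N p k : ℝ)|
        ≤ zv.2 p k}) :
    ∀ zv ∈ Set.extremePoints ℝ Q,
      (∀ ℓ, zv.1 ℓ = 0 ∨ zv.1 ℓ = 1) ∧
      (∀ p k, ∃ n : ℤ, zv.2 p k = (n : ℝ)) := by
  subst hQ
  rintro ⟨z, v⟩ ⟨⟨hbox, hsum, hcon⟩, hext⟩
  classical
  dsimp only at hbox hsum hcon
  -- notation for the category cells
  set Sp : ∀ p : Fin P, Fin (K p) → Finset (Fin L) :=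
    fun p k => Finset.univ.filter (fun ℓ => c p ℓ = k) with hSpdef
  -- membership in a cell
  have hmemSp : ∀ p k ℓ, ℓ ∈ Sp p k ↔ c p ℓ = k := by
    intro p k ℓ; simp [hSpdef]
  -- laminarity of the cells
  have hlamSp : ∀ (p p' : Fin P) (k : Fin (K p)) (k' : Fin (K p')),
      Sp p k ⊆ Sp p' k' ∨ Sp p' k' ⊆ Sp p k ∨ Sp p k ∩ Sp p' k' = ∅ := by
    intro p p' k k'
    rcases lt_trichotomy p p' with hpp | hpp | hpp
    · -- p < p' : cell of p' is contained in some cell of p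
      obtain ⟨k'', hk''⟩ := hnested p p' hpp k'
      by_cases hkk : k'' = k
      · subst hkk
        exact Or.inr (Or.inl (fun ℓ hℓ => (hmemSp _ _ _).mpr (hk'' ℓ ((hmemSp _ _ _).mp hℓ))))
      · refine Or.inr (Or.inr ?_)
        rw [Finset.eq_empty_iff_forall_notMem]
        intro ℓ hℓ
        rw [Finset.mem_inter] at hℓ
        exact hkk ((hk'' ℓ ((hmemSp _ _ _).mp hℓ.2)).symm.trans ((hmemSp _ _ _).mp hℓ.1))
    · subst hpp
      by_cases hkk : k = k'
      · subst hkk; exact Or.inl (subset_refl _)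
      · refine Or.inr (Or.inr ?_)
        rw [Finset.eq_empty_iff_forall_notMem]
        intro ℓ hℓ
        rw [Finset.mem_inter] at hℓ
        exact hkk (((hmemSp _ _ _).mp hℓ.1).symm.trans ((hmemSp _ _ _).mp hℓ.2))
    · obtain ⟨k'', hk''⟩ := hnested p' p hpp k
      by_cases hkk : k'' = k'
      · subst hkk
        exact Or.inl (fun ℓ hℓ => (hmemSp _ _ _).mpr (hk'' ℓ ((hmemSp _ _ _).mp hℓ)))
      · refine Or.inr (Or.inr ?_)
        rw [Finset.eq_empty_iff_forall_notMem]
        intro ℓ hℓ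
        rw [Finset.mem_inter] at hℓ
        exact hkk ((hk'' ℓ ((hmemSp _ _ _).mp hℓ.1)).symm.trans ((hmemSp _ _ _).mp hℓ.2))
  -- characteristic-difference sums
  have hchi : ∀ (a b : Fin L) (t : Finset (Fin L)),
      (∑ ℓ ∈ t, ((if ℓ = a then (1:ℝ) else 0) - if ℓ = b then 1 else 0))
        = (if a ∈ t then 1 else 0) - if b ∈ t then 1 else 0 := by
    intro a b t
    rw [Finset.sum_sub_distrib, Finset.sum_ite_eq' t a (fun _ => (1:ℝ)),
      Finset.sum_ite_eq' t b (fun _ => (1:ℝ))]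
  -- Part 1 : z is 0/1-valued
  have hfrac : ∀ ℓ, z ℓ = 0 ∨ z ℓ = 1 := by
    by_contra hcon'
    push_neg at hcon'
    obtain ⟨ℓ₀, hℓ₀⟩ := hcon'
    set F : Finset (Fin L) := Finset.univ.filter (fun ℓ => z ℓ ≠ 0 ∧ z ℓ ≠ 1) with hFdef
    have hFne : F.Nonempty := ⟨ℓ₀, by simp [hFdef, hℓ₀.1, hℓ₀.2]⟩
    have hFmem : ∀ ℓ ∈ F, 0 < z ℓ ∧ z ℓ < 1 := by
      intro ℓ hℓ
      rw [hFdef, Finset.mem_filter] at hℓ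
      exact ⟨lt_of_le_of_ne (hbox ℓ).1 (Ne.symm hℓ.2.1), lt_of_le_of_ne (hbox ℓ).2 hℓ.2.2⟩
    -- the family of tight sets
    set TS : Set (Finset (Fin L)) :=
      {S | S = Finset.univ ∨ ∃ p k, S = Sp p k ∧ (∑ ℓ ∈ Sp p k, z ℓ) = N p k} with hTSdef
    have hTSuniv : (Finset.univ : Finset (Fin L)) ∈ TS := Or.inl rfl
    -- sums over tight sets are integers
    have hTSint : ∀ S ∈ TS, ∃ m : ℤ, (∑ ℓ ∈ S, z ℓ) = (m : ℝ) := by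
      rintro S (rfl | ⟨p, k, rfl, hS⟩)
      · exact ⟨T, by rw [hsum]; push_cast; ring⟩
      · exact ⟨N p k, by rw [hS]; push_cast; ring⟩
    -- laminarity of tight sets
    have hlam : ∀ S ∈ TS, ∀ S' ∈ TS, S ⊆ S' ∨ S' ⊆ S ∨ S ∩ S' = ∅ := by
      rintro S (rfl | ⟨p, k, rfl, -⟩) S' hS'
      · exact Or.inr (Or.inl (Finset.subset_univ _))
      · rcases hS' with rfl | ⟨p', k', rfl, -⟩
        · exact Or.inl (Finset.subset_univ _)
        · exact hlamSp p p' k k'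
    -- choose a tight set with minimal nonempty fractional trace
    have hPex : ∃ n, ∃ S ∈ TS, (S ∩ F).Nonempty ∧ (S ∩ F).card = n :=
      ⟨F.card, Finset.univ, hTSuniv, by simpa [Finset.univ_inter] using hFne,
        by rw [Finset.univ_inter]⟩
    obtain ⟨S₀, hS₀TS, hS₀ne, hS₀card⟩ := Nat.find_spec hPex
    have hS₀min : ∀ S ∈ TS, (S ∩ F).Nonempty → (S₀ ∩ F).card ≤ (S ∩ F).card := by
      intro S hS hSne
      rw [hS₀card]
      exact Nat.find_min' hPex ⟨S, hS, hSne, rfl⟩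
    -- the fractional trace of S₀ has at least two elements
    have htwo : 1 < (S₀ ∩ F).card := by
      obtain ⟨m, hm⟩ := hTSint S₀ hS₀TS
      -- sum over S₀ \ F is an integer
      have hint2 : ∃ m2 : ℤ, (∑ ℓ ∈ S₀ \ F, z ℓ) = (m2 : ℝ) := by
        refine ⟨∑ ℓ ∈ S₀ \ F, if z ℓ = 1 then 1 else 0, ?_⟩
        push_cast
        refine Finset.sum_congr rfl ?_
        intro ℓ hℓ
        rw [Finset.mem_sdiff] at hℓ
        have : z ℓ = 0 ∨ z ℓ = 1 := by
          by_contra h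
          push_neg at h
          exact hℓ.2 (by simp [hFdef, h.1, h.2])
        rcases this with h | h <;> simp [h]
      obtain ⟨m2, hm2⟩ := hint2
      have hsplit : (∑ ℓ ∈ S₀ ∩ F, z ℓ) = ((m - m2 : ℤ) : ℝ) := by
        have := Finset.sum_inter_add_sum_sdiff S₀ F z
        push_cast
        linarith
      have hpos : 0 < ∑ ℓ ∈ S₀ ∩ F, z ℓ :=
        Finset.sum_pos (fun ℓ hℓ => (hFmem ℓ (Finset.mem_inter.mp hℓ).2).1) hS₀ne
      have hlt : (∑ ℓ ∈ S₀ ∩ F, z ℓ) < (S₀ ∩ F).card := by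
        have h1 : (∑ ℓ ∈ S₀ ∩ F, z ℓ) < ∑ ℓ ∈ S₀ ∩ F, (1:ℝ) :=
          Finset.sum_lt_sum_of_nonempty hS₀ne
            (fun ℓ hℓ => (hFmem ℓ (Finset.mem_inter.mp hℓ).2).2)
        have h2 : (∑ ℓ ∈ S₀ ∩ F, (1:ℝ)) = (S₀ ∩ F).card := by simp
        linarith
      have h1le : (1:ℝ) ≤ ∑ ℓ ∈ S₀ ∩ F, z ℓ := by
        rw [hsplit] at hpos ⊢
        exact_mod_cast hpos
      have : (1:ℝ) < (S₀ ∩ F).card := lt_of_le_of_lt h1le hlt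
      exact_mod_cast this
    obtain ⟨a, ha, b, hb, hab⟩ := Finset.one_lt_card.mp htwo
    have haF : a ∈ F := (Finset.mem_inter.mp ha).2
    have hbF : b ∈ F := (Finset.mem_inter.mp hb).2
    -- key : every tight set contains a iff it contains b
    have key : ∀ S ∈ TS, (a ∈ S ↔ b ∈ S) := by
      intro S hS
      rcases hlam S hS S₀ hS₀TS with h | h | h
      · by_cases hSne : (S ∩ F).Nonempty
        · have hsub : S ∩ F ⊆ S₀ ∩ F := Finset.inter_subset_inter h (subset_refl F)
          have heq : S ∩ F = S₀ ∩ F :=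
            Finset.eq_of_subset_of_card_le hsub (hS₀min S hS hSne)
          constructor
          · intro _; exact (Finset.mem_inter.mp (heq ▸ hb)).1
          · intro _; exact (Finset.mem_inter.mp (heq ▸ ha)).1
        · constructor
          · intro haS; exact absurd ⟨a, Finset.mem_inter.mpr ⟨haS, haF⟩⟩ hSne
          · intro hbS; exact absurd ⟨b, Finset.mem_inter.mpr ⟨hbS, hbF⟩⟩ hSne
      · exact ⟨fun _ => h (Finset.mem_inter.mp hb).1, fun _ => h (Finset.mem_inter.mp ha).1⟩
      · constructor
        · intro haS
          exact absurd (Finset.mem_inter.mpr ⟨haS, (Finset.mem_inter.mp ha).1⟩)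
            (by rw [h]; exact Finset.notMem_empty a)
        · intro hbS
          exact absurd (Finset.mem_inter.mpr ⟨hbS, (Finset.mem_inter.mp hb).1⟩)
            (by rw [h]; exact Finset.notMem_empty b)
    have key' : ∀ p k, (∑ ℓ ∈ Sp p k, z ℓ) = N p k → (a ∈ Sp p k ↔ b ∈ Sp p k) :=
      fun p k h => key _ (Or.inr ⟨p, k, rfl, h⟩)
    -- choose ε
    set g : (Σ p : Fin P, Fin (K p)) → ℝ :=
      fun q => if ¬((a ∈ Sp q.1 q.2) ↔ (b ∈ Sp q.1 q.2))
        then |(∑ ℓ ∈ Sp q.1 q.2, z ℓ) - N q.1 q.2| else 1 with hgdef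
    set cand : Finset ℝ :=
      insert (z a) (insert (1 - z a) (insert (z b) (insert (1 - z b)
        (Finset.univ.image g)))) with hcanddef
    have hcandne : cand.Nonempty := ⟨z a, by simp [hcanddef]⟩
    set ε : ℝ := cand.min' hcandne with hεdef
    have hgpos : ∀ q : (Σ p : Fin P, Fin (K p)), 0 < g q := by
      intro q
      simp only [hgdef]
      by_cases hq : ¬((a ∈ Sp q.1 q.2) ↔ (b ∈ Sp q.1 q.2))
      · rw [if_pos hq]
        rw [abs_pos]
        intro hzero
        exact hq (key' q.1 q.2 (by linarith))
      · rw [if_neg hq]; norm_num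
    have hεpos : 0 < ε := by
      have hmem := cand.min'_mem hcandne
      rw [← hεdef] at hmem
      rw [hcanddef] at hmem
      simp only [Finset.mem_insert, Finset.mem_image] at hmem
      rcases hmem with h | h | h | h | ⟨q, -, h⟩
      · rw [h]; exact (hFmem a haF).1
      · rw [h]; linarith [(hFmem a haF).2]
      · rw [h]; exact (hFmem b hbF).1
      · rw [h]; linarith [(hFmem b hbF).2]
      · rw [← h]; exact hgpos q
    have hεle : ∀ x ∈ cand, ε ≤ x := fun x hx => cand.min'_le x hx
    have hεa : ε ≤ z a := hεle _ (by simp [hcanddef])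
    have hεa' : ε ≤ 1 - z a := hεle _ (by simp [hcanddef])
    have hεb : ε ≤ z b := hεle _ (by simp [hcanddef])
    have hεb' : ε ≤ 1 - z b := hεle _ (by simp [hcanddef])
    have hεg : ∀ p k, ¬((a ∈ Sp p k) ↔ (b ∈ Sp p k)) →
        ε ≤ |(∑ ℓ ∈ Sp p k, z ℓ) - N p k| := by
      intro p k h
      have : g ⟨p, k⟩ = |(∑ ℓ ∈ Sp p k, z ℓ) - N p k| := by simp only [hgdef]; exact if_pos h
      rw [← this]
      refine hεle _ ?_
      rw [hcanddef]
      simp only [Finset.mem_insert, Finset.mem_image]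
      exact Or.inr (Or.inr (Or.inr (Or.inr ⟨⟨p, k⟩, Finset.mem_univ _, rfl⟩)))
    -- perturbation direction on z
    set e : Fin L → ℝ := fun ℓ => (if ℓ = a then 1 else 0) - if ℓ = b then 1 else 0
      with hedef
    -- perturbed points
    set wplus : Fin L → ℝ := fun ℓ => z ℓ + ε * e ℓ with hwplus
    set wminus : Fin L → ℝ := fun ℓ => z ℓ - ε * e ℓ with hwminus
    set d : ∀ p : Fin P, Fin (K p) → ℝ := fun p k =>
      (if (∑ ℓ ∈ Sp p k, z ℓ) - N p k < 0 then -1 else 1) *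
        (ε * ((if a ∈ Sp p k then 1 else 0) - if b ∈ Sp p k then 1 else 0)) with hddef
    set vplus : ∀ p : Fin P, Fin (K p) → ℝ := fun p k => v p k + d p k with hvplus
    set vminus : ∀ p : Fin P, Fin (K p) → ℝ := fun p k => v p k - d p k with hvminus
    have hesum : ∀ t : Finset (Fin L),
        (∑ ℓ ∈ t, e ℓ) = (if a ∈ t then 1 else 0) - if b ∈ t then 1 else 0 := by
      intro t; simp only [hedef]; exact hchi a b t
    have hwsumplus : ∀ t : Finset (Fin L),
        (∑ ℓ ∈ t, wplus ℓ) = (∑ ℓ ∈ t, z ℓ)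
          + ε * ((if a ∈ t then 1 else 0) - if b ∈ t then 1 else 0) := by
      intro t
      simp only [hwplus]
      rw [Finset.sum_add_distrib, ← Finset.mul_sum, hesum]
    have hwsumminus : ∀ t : Finset (Fin L),
        (∑ ℓ ∈ t, wminus ℓ) = (∑ ℓ ∈ t, z ℓ)
          - ε * ((if a ∈ t then 1 else 0) - if b ∈ t then 1 else 0) := by
      intro t
      simp only [hwminus]
      rw [Finset.sum_sub_distrib, ← Finset.mul_sum, hesum]
    -- bounds for the perturbed z's
    have hbound : ∀ ℓ, (0 ≤ wplus ℓ ∧ wplus ℓ ≤ 1) ∧ (0 ≤ wminus ℓ ∧ wminus ℓ ≤ 1) := by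
      intro ℓ
      have hew : wplus ℓ = z ℓ + ε * e ℓ := by simp only [hwplus]
      have hew' : wminus ℓ = z ℓ - ε * e ℓ := by simp only [hwminus]
      by_cases hla : ℓ = a
      · have he : e ℓ = 1 := by simp [hedef, hla, hab]
        rw [hew, hew', he, mul_one, hla]
        have h1 := (hFmem a haF).1
        have h2 := (hFmem a haF).2
        exact ⟨⟨by linarith [hεpos.le], by linarith⟩, by linarith, by linarith⟩
      · by_cases hlb : ℓ = b
        · have he : e ℓ = -1 := by simp [hedef, hla, hlb, hab.symm]
          rw [hew, hew', he, mul_neg_one, hlb]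
          have h1 := (hFmem b hbF).1
          have h2 := (hFmem b hbF).2
          exact ⟨⟨by linarith, by linarith⟩, by linarith [hεpos.le], by linarith⟩
        · have he : e ℓ = 0 := by simp [hedef, hla, hlb]
          rw [hew, hew', he, mul_zero, add_zero, sub_zero]
          exact ⟨hbox ℓ, hbox ℓ⟩
    -- constraint satisfaction for the perturbed points
    have hconpm : ∀ p k,
        |(∑ ℓ ∈ Sp p k, wplus ℓ) - N p k| ≤ vplus p k ∧
        |(∑ ℓ ∈ Sp p k, wminus ℓ) - N p k| ≤ vminus p k := by
      intro p k
      set s := (∑ ℓ ∈ Sp p k, z ℓ) - (N p k : ℝ) with hs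
      set δ := ε * ((if a ∈ Sp p k then 1 else 0) - if b ∈ Sp p k then 1 else 0) with hδ
      have hplus : (∑ ℓ ∈ Sp p k, wplus ℓ) - N p k = s + δ := by
        rw [hwsumplus]; simp only [hs] ; rw [ hδ]; ring
      have hminus : (∑ ℓ ∈ Sp p k, wminus ℓ) - N p k = s + (-δ) := by
        rw [hwsumminus]; simp only [hs] ; rw [ hδ]; ring
      have hd : d p k = (if s < 0 then -1 else 1) * δ := by
        simp only [hddef, hs, hδ]
      have habs : |δ| ≤ |s| := by
        by_cases hiff : (a ∈ Sp p k) ↔ (b ∈ Sp p k)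
        · have : δ = 0 := by
            simp only [hδ]
            by_cases haS : a ∈ Sp p k
            · rw [if_pos haS, if_pos (hiff.mp haS)]; ring
            · rw [if_neg haS, if_neg (fun h => haS (hiff.mpr h))]; ring
          rw [this]; simp
        · have hle := hεg p k hiff
          rw [← hs] at hle
          have : |δ| ≤ ε := by
            simp only [hδ] ; rw [ abs_mul, abs_of_pos hεpos]
            have : |(if a ∈ Sp p k then (1:ℝ) else 0) - if b ∈ Sp p k then 1 else 0| ≤ 1 := by
              by_cases haS : a ∈ Sp p k <;> by_cases hbS : b ∈ Sp p k <;>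
                simp [haS, hbS]
            nlinarith [hεpos.le]
          linarith
      have hsv : |s| ≤ v p k := by simp only [hs]; exact hcon p k
      constructor
      · rw [hplus]
        simp only [hvplus]
        rw [hd]
        exact aux_abs_ineq s (v p k) δ hsv habs
      · rw [hminus]
        simp only [hvminus]
        rw [hd]
        have := aux_abs_ineq s (v p k) (-δ) hsv (by rwa [abs_neg])
        calc |s + -δ| ≤ v p k + (if s < 0 then -1 else 1) * (-δ) := this
          _ = v p k - (if s < 0 then -1 else 1) * δ := by ring
    -- both perturbed points are in Q
    have hx : (wplus, vplus) ∈ {zv : (Fin L → ℝ) × (∀ p : Fin P, Fin (K p) → ℝ) |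
        (∀ ℓ, 0 ≤ zv.1 ℓ ∧ zv.1 ℓ ≤ 1) ∧ (∑ ℓ, zv.1 ℓ) = (T : ℝ) ∧
        ∀ p k, |(∑ ℓ ∈ Finset.univ.filter (fun ℓ => c p ℓ = k), zv.1 ℓ) - (N p k : ℝ)|
          ≤ zv.2 p k} := by
      refine ⟨fun ℓ => (hbound ℓ).1, ?_, fun p k => (hconpm p k).1⟩
      rw [hwsumplus Finset.univ]
      simp [hsum]
    have hy : (wminus, vminus) ∈ {zv : (Fin L → ℝ) × (∀ p : Fin P, Fin (K p) → ℝ) |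
        (∀ ℓ, 0 ≤ zv.1 ℓ ∧ zv.1 ℓ ≤ 1) ∧ (∑ ℓ, zv.1 ℓ) = (T : ℝ) ∧
        ∀ p k, |(∑ ℓ ∈ Finset.univ.filter (fun ℓ => c p ℓ = k), zv.1 ℓ) - (N p k : ℝ)|
          ≤ zv.2 p k} := by
      refine ⟨fun ℓ => (hbound ℓ).2, ?_, fun p k => (hconpm p k).2⟩
      rw [hwsumminus Finset.univ]
      simp [hsum]
    -- (z, v) is the midpoint
    have hseg : (z, v) ∈ openSegment ℝ (wplus, vplus) (wminus, vminus) := by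
      refine ⟨1/2, 1/2, by norm_num, by norm_num, by norm_num, ?_⟩
      rw [Prod.smul_mk, Prod.smul_mk, Prod.mk_add_mk]
      congr 1
      · funext ℓ
        simp only [hwplus] ; rw [ hwminus]
        simp only [Pi.add_apply, Pi.smul_apply, smul_eq_mul]
        ring
      · funext p k
        simp only [hvplus] ; rw [ hvminus]
        simp only [Pi.add_apply, Pi.smul_apply, smul_eq_mul]
        ring
    have hxz := (hext hx hy hseg)
    have hza : wplus a = z a := congrFun (congrArg Prod.fst hxz) a
    have hwa : wplus a = z a + ε := by
      have he : e a = 1 := by simp [hedef, hab]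
      simp only [hwplus, he, mul_one]
    rw [hwa] at hza
    have : ε = 0 := by linarith
    exact absurd this (ne_of_gt hεpos)
  refine ⟨hfrac, ?_⟩
  -- Part 2 : v is integral
  intro p k
  -- the cell sum is an integer
  have hintsum : ∃ m : ℤ, (∑ ℓ ∈ Sp p k, z ℓ) = (m : ℝ) := by
    refine ⟨∑ ℓ ∈ Sp p k, if z ℓ = 1 then 1 else 0, ?_⟩
    push_cast
    refine Finset.sum_congr rfl ?_
    intro ℓ _
    rcases hfrac ℓ with h | h <;> simp [h]
  obtain ⟨m, hm⟩ := hintsum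
  -- v p k equals |s p k| by extremality
  have hveq : v p k = |(∑ ℓ ∈ Sp p k, z ℓ) - (N p k : ℝ)| := by
    by_contra hne
    have hlt : |(∑ ℓ ∈ Sp p k, z ℓ) - (N p k : ℝ)| < v p k :=
      lt_of_le_of_ne (hcon p k) (Ne.symm hne)
    set η := v p k - |(∑ ℓ ∈ Sp p k, z ℓ) - (N p k : ℝ)| with hηdef
    have hηpos : 0 < η := by rw [hηdef]; linarith
    set vplus := Function.update v p (Function.update (v p) k (v p k + η)) with hvplus
    set vminus := Function.update v p (Function.update (v p) k (v p k - η)) with hvminus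
    have hvpk : vplus p k = v p k + η := by
      simp only [hvplus]
      rw [Function.update_self, Function.update_self]
    have hvmk : vminus p k = v p k - η := by
      simp only [hvminus]
      rw [Function.update_self, Function.update_self]
    have hval : ∀ p' k', (vplus p' k' = v p' k' ∧ vminus p' k' = v p' k') ∨
        (vplus p' k' = v p' k' + η ∧ vminus p' k' = v p' k' - η ∧
          v p' k' - η = |(∑ ℓ ∈ Sp p' k', z ℓ) - (N p' k' : ℝ)|) := by
      intro p' k'
      by_cases hp : p' = p
      · subst hp
        by_cases hk : k' = k
        · subst hk
          refine Or.inr ⟨hvpk, hvmk, ?_⟩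
          rw [hηdef]; ring
        · refine Or.inl ⟨?_, ?_⟩
          · simp only [hvplus]
            rw [Function.update_self, Function.update_of_ne hk]
          · simp only [hvminus]
            rw [Function.update_self, Function.update_of_ne hk]
      · refine Or.inl ⟨?_, ?_⟩
        · simp only [hvplus]
          rw [Function.update_of_ne hp]
        · simp only [hvminus]
          rw [Function.update_of_ne hp]
    have hx : (z, vplus) ∈ {zv : (Fin L → ℝ) × (∀ p : Fin P, Fin (K p) → ℝ) |
        (∀ ℓ, 0 ≤ zv.1 ℓ ∧ zv.1 ℓ ≤ 1) ∧ (∑ ℓ, zv.1 ℓ) = (T : ℝ) ∧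
        ∀ p k, |(∑ ℓ ∈ Finset.univ.filter (fun ℓ => c p ℓ = k), zv.1 ℓ) - (N p k : ℝ)|
          ≤ zv.2 p k} := by
      refine ⟨hbox, hsum, ?_⟩
      intro p' k'
      dsimp only
      rcases hval p' k' with ⟨hpl, -⟩ | ⟨hpl, -, -⟩
      · rw [hpl]; exact hcon p' k'
      · rw [hpl]
        exact le_trans (hcon p' k') (by linarith : v p' k' ≤ v p' k' + η)
    have hy : (z, vminus) ∈ {zv : (Fin L → ℝ) × (∀ p : Fin P, Fin (K p) → ℝ) |
        (∀ ℓ, 0 ≤ zv.1 ℓ ∧ zv.1 ℓ ≤ 1) ∧ (∑ ℓ, zv.1 ℓ) = (T : ℝ) ∧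
        ∀ p k, |(∑ ℓ ∈ Finset.univ.filter (fun ℓ => c p ℓ = k), zv.1 ℓ) - (N p k : ℝ)|
          ≤ zv.2 p k} := by
      refine ⟨hbox, hsum, ?_⟩
      intro p' k'
      dsimp only
      rcases hval p' k' with ⟨-, hmn⟩ | ⟨-, hmn, heq⟩
      · rw [hmn]; exact hcon p' k'
      · rw [hmn, heq]
    have hseg : (z, v) ∈ openSegment ℝ (z, vplus) (z, vminus) := by
      refine ⟨1/2, 1/2, by norm_num, by norm_num, by norm_num, ?_⟩
      rw [Prod.smul_mk, Prod.smul_mk, Prod.mk_add_mk]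
      congr 1
      · funext ℓ
        simp only [Pi.add_apply, Pi.smul_apply, smul_eq_mul]
        ring
      · funext p' k'
        rcases hval p' k' with ⟨hpl, hmn⟩ | ⟨hpl, hmn, -⟩ <;>
          · simp only [Pi.add_apply, Pi.smul_apply, smul_eq_mul]
            rw [hpl, hmn]; ring
    have hxz := (hext hx hy hseg)
    have hv' : vplus p k = v p k := congrFun (congrFun (congrArg Prod.snd hxz) p) k
    rw [hvpk] at hv'
    linarith
  refine ⟨|m - N p k|, ?_⟩
  show v p k = _
  rw [hveq, hm]
  push_cast
  ring
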